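/- Let (a_1, a_2) and (b_1, b_2) be two orthonormal bases of ℂ² (the eigenbases of two qubit observables A and B), and let c = max over i, j ∈ {1,2} of |⟨a_i, b_j⟩|. Then for every unit vector ψ ∈ ℂ², the average fidelity-based disturbance satisfies (1/2)[(1 − Σ_{i=1}^{2} |⟨a_i, ψ⟩|⁴) + (1 − Σ_{j=1}^{2} |⟨b_j, ψ⟩|⁴)] ≥ (1/2)(1 − c²). -/

import Mathlib

open Matrix

private lemma qdt_core (t s k : ℝ) (hk0 : 0 ≤ k) (hk1 : k ≤ 1) (hs : s^2 ≤ 1)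
    (hC : (t - k*s)^2 ≤ (1-k^2)*(1-s^2)) : t^2 + s^2 ≤ 1 + k := by
  rcases eq_or_lt_of_le hk1 with h1 | h1
  · subst h1; nlinarith [sq_nonneg (t - s)]
  · have hW : 0 ≤ (1 - k) * (1 + k - s^2 - t^2) := by
      nlinarith [mul_nonneg hk0 (sq_nonneg (s - t))]
    nlinarith [(mul_nonneg_iff_of_pos_left (by linarith : (0:ℝ) < 1 - k)).mp hW]

private lemma qdt_decomp (u00 u01 u10 u11 b0 b1 : ℂ) :
    Complex.normSq (u00*b0 + u01*b1) - Complex.normSq (u10*b0 + u11*b1)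
      = (Complex.normSq u00 - Complex.normSq u10) * Complex.normSq b0
        + (Complex.normSq u01 - Complex.normSq u11) * Complex.normSq b1
        + 2 * ((u00 * (starRingEnd ℂ) u01 - u10 * (starRingEnd ℂ) u11)
                * b0 * (starRingEnd ℂ) b1).re := by
  simp only [Complex.normSq_apply, Complex.mul_re, Complex.mul_im, Complex.add_re, Complex.add_im,
    Complex.sub_re, Complex.sub_im, Complex.conj_re, Complex.conj_im]
  ring

private lemma qdt_normSq_w (u00 u01 u10 u11 : ℂ)
    (horth : u00 * (starRingEnd ℂ) u10 + u01 * (starRingEnd ℂ) u11 = 0) :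
    Complex.normSq (u00 * (starRingEnd ℂ) u01 - u10 * (starRingEnd ℂ) u11)
      = Complex.normSq u00 * Complex.normSq u01 + Complex.normSq u10 * Complex.normSq u11
        + 2 * (Complex.normSq u01 * Complex.normSq u11) := by
  have h1 : u00 * (starRingEnd ℂ) u10 = -(u01 * (starRingEnd ℂ) u11) := by
    linear_combination horth
  have h1c : (starRingEnd ℂ) u00 * u10 = -((starRingEnd ℂ) u01 * u11) := by
    have := congrArg (starRingEnd ℂ) h1
    simpa [_root_.map_mul, map_neg] using this
  have hw : (u00 * (starRingEnd ℂ) u01 - u10 * (starRingEnd ℂ) u11) *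
        (starRingEnd ℂ) (u00 * (starRingEnd ℂ) u01 - u10 * (starRingEnd ℂ) u11)
      = (u00 * (starRingEnd ℂ) u00) * (u01 * (starRingEnd ℂ) u01)
        + (u10 * (starRingEnd ℂ) u10) * (u11 * (starRingEnd ℂ) u11)
        + 2 * ((u01 * (starRingEnd ℂ) u01) * (u11 * (starRingEnd ℂ) u11)) := by
    simp only [map_sub, _root_.map_mul, Complex.conj_conj]
    linear_combination (-((starRingEnd ℂ) u01 * u11)) * h1 + (-(u01 * (starRingEnd ℂ) u11)) * h1c
  rw [Complex.mul_conj, Complex.mul_conj, Complex.mul_conj, Complex.mul_conj,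
    Complex.mul_conj] at hw
  exact_mod_cast hw

private lemma qdt_final (P0 P1 Q0 Q1 X r c : ℝ)
    (hP : P0 + P1 = 1) (hQ : Q0 + Q1 = 1)
    (hQ0 : 0 ≤ Q0) (hQ1 : 0 ≤ Q1)
    (hX0 : 0 ≤ X) (hX1 : X ≤ 1)
    (hXc : X ≤ c^2) (hYc : 1 - X ≤ c^2)
    (hlin : P0 - P1 = (X - (1-X))*Q0 + ((1-X) - X)*Q1 + 2*r)
    (hr : r^2 ≤ (4*X*(1-X)) * (Q0*Q1)) :
    1/2 * ((1 - (P0^2 + P1^2)) + (1 - (Q0^2 + Q1^2))) ≥ 1/2 * (1 - c^2) := by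
  have hs1 : (Q0 - Q1)^2 ≤ 1 := by nlinarith [mul_nonneg hQ0 hQ1]
  have hC : ((P0-P1) - (2*X-1)*(Q0-Q1))^2 ≤ (1-(2*X-1)^2)*(1-(Q0-Q1)^2) := by
    have h4 : ((P0-P1) - (2*X-1)*(Q0-Q1))^2 = 4 * r^2 := by
      linear_combination ((P0-P1) - (2*X-1)*(Q0-Q1) + 2*r) * hlin
    have h5 : (1-(2*X-1)^2)*(1-(Q0-Q1)^2) = (4*X*(1-X)) * (4*(Q0*Q1)) := by
      linear_combination (-(1-(2*X-1)^2) * (1+Q0+Q1)) * hQ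
    rw [h4, h5]; linarith
  have hts : (P0-P1)^2 + (Q0-Q1)^2 ≤ 2 * c^2 := by
    rcases le_or_gt 0 (2*X-1) with hk | hk
    · have := qdt_core (P0-P1) (Q0-Q1) (2*X-1) hk (by linarith) hs1 hC
      linarith
    · have hC' : ((P0-P1) - (-(2*X-1))*(-(Q0-Q1)))^2
          ≤ (1-(-(2*X-1))^2)*(1-(-(Q0-Q1))^2) := by
        ring_nf; ring_nf at hC; linarith
      have := qdt_core (P0-P1) (-(Q0-Q1)) (-(2*X-1)) (by linarith) (by linarith)
        (by nlinarith) hC'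
      nlinarith
  have hPt : P0^2 + P1^2 = (1 + (P0-P1)^2)/2 := by
    linear_combination ((P0+P1+1)/2) * hP
  have hQt : Q0^2 + Q1^2 = (1 + (Q0-Q1)^2)/2 := by
    linear_combination ((Q0+Q1+1)/2) * hQ
  rw [hPt, hQt]; linarith

/-- For two orthonormal bases `(a 1, a 2)` and `(b 1, b 2)` of `ℂ²`
with overlap constant `c = max_{i,j} |⟨a i, b j⟩|`, every unit vector `ψ` satisfies the
optimal disturbance tradeoff
`(1/2)[(1 - ∑ i |⟨a i, ψ⟩|⁴) + (1 - ∑ j |⟨b j, ψ⟩|⁴)] ≥ (1/2)(1 - c²)`. -/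
theorem qubit_disturbance_tradeoff
    (a b : Fin 2 → (Fin 2 → ℂ))
    (ha : ∀ i j, star (a i) ⬝ᵥ a j = if i = j then (1 : ℂ) else 0)
    (hb : ∀ i j, star (b i) ⬝ᵥ b j = if i = j then (1 : ℂ) else 0)
    (c : ℝ)
    (hc : IsGreatest {x : ℝ | ∃ i j, x = ‖star (a i) ⬝ᵥ b j‖} c)
    (ψ : Fin 2 → ℂ) (hψ : star ψ ⬝ᵥ ψ = 1) :
    (1 / 2) * ((1 - ∑ i, ‖star (a i) ⬝ᵥ ψ‖ ^ 4)
        + (1 - ∑ j, ‖star (b j) ⬝ᵥ ψ‖ ^ 4))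
      ≥ (1 / 2) * (1 - c ^ 2) := by
  set A : Matrix (Fin 2) (Fin 2) ℂ := Matrix.of fun i k => (starRingEnd ℂ) (a i k) with hAdef
  set B : Matrix (Fin 2) (Fin 2) ℂ := Matrix.of fun i k => (starRingEnd ℂ) (b i k) with hBdef
  have hA : A * Aᴴ = 1 := by
    ext i j
    simpa [Matrix.mul_apply, Matrix.conjTranspose_apply, dotProduct, Matrix.one_apply, hAdef,
      mul_comm] using ha i j
  have hB : B * Bᴴ = 1 := by
    ext i j
    simpa [Matrix.mul_apply, Matrix.conjTranspose_apply, dotProduct, Matrix.one_apply, hBdef,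
      mul_comm] using hb i j
  have hA2 : Aᴴ * A = 1 := mul_eq_one_comm.mp hA
  have hB2 : Bᴴ * B = 1 := mul_eq_one_comm.mp hB
  set U : Matrix (Fin 2) (Fin 2) ℂ := A * Bᴴ with hUdef
  have hU1 : U * Uᴴ = 1 := by
    calc U * Uᴴ = A * (Bᴴ * B) * Aᴴ := by
          simp only [hUdef, Matrix.conjTranspose_mul, Matrix.conjTranspose_conjTranspose,
            Matrix.mul_assoc]
      _ = 1 := by rw [hB2, Matrix.mul_one, hA]
  have hU2 : Uᴴ * U = 1 := mul_eq_one_comm.mp hU1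
  have hUab : ∀ i j, U i j = star (a i) ⬝ᵥ b j := by
    intro i j
    simp [hUdef, hAdef, hBdef, Matrix.mul_apply, Matrix.conjTranspose_apply, dotProduct]
  have hal : (fun i => star (a i) ⬝ᵥ ψ) = A *ᵥ ψ := by
    ext i; simp [Matrix.mulVec, dotProduct, hAdef]
  have hbe : (fun j => star (b j) ⬝ᵥ ψ) = B *ᵥ ψ := by
    ext i; simp [Matrix.mulVec, dotProduct, hBdef]
  have hUB : U * B = A := by rw [hUdef, Matrix.mul_assoc, hB2, Matrix.mul_one]
  have halU : (fun i => star (a i) ⬝ᵥ ψ) = U *ᵥ (B *ᵥ ψ) := by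
    rw [hal, Matrix.mulVec_mulVec, hUB]
  -- normalization of coefficient vectors
  have hnormbe : star (B *ᵥ ψ) ⬝ᵥ (B *ᵥ ψ) = 1 := by
    rw [Matrix.star_mulVec, Matrix.dotProduct_mulVec, Matrix.vecMul_vecMul, hB2,
      Matrix.vecMul_one, hψ]
  have hnormal : star (A *ᵥ ψ) ⬝ᵥ (A *ᵥ ψ) = 1 := by
    rw [Matrix.star_mulVec, Matrix.dotProduct_mulVec, Matrix.vecMul_vecMul, hA2,
      Matrix.vecMul_one, hψ]
  set be : Fin 2 → ℂ := B *ᵥ ψ with hbedef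
  set al : Fin 2 → ℂ := A *ᵥ ψ with haldef
  -- unitarity components
  have hrow0 : U 0 0 * (starRingEnd ℂ) (U 0 0) + U 0 1 * (starRingEnd ℂ) (U 0 1) = 1 := by
    simpa [Matrix.mul_apply, Fin.sum_univ_two, Matrix.conjTranspose_apply, Matrix.one_apply]
      using congrFun (congrFun hU1 0) 0
  have hrow1 : U 1 0 * (starRingEnd ℂ) (U 1 0) + U 1 1 * (starRingEnd ℂ) (U 1 1) = 1 := by
    simpa [Matrix.mul_apply, Fin.sum_univ_two, Matrix.conjTranspose_apply, Matrix.one_apply]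
      using congrFun (congrFun hU1 1) 1
  have horth : U 0 0 * (starRingEnd ℂ) (U 1 0) + U 0 1 * (starRingEnd ℂ) (U 1 1) = 0 := by
    simpa [Matrix.mul_apply, Fin.sum_univ_two, Matrix.conjTranspose_apply, Matrix.one_apply]
      using congrFun (congrFun hU1 0) 1
  have hcol0 : (starRingEnd ℂ) (U 0 0) * U 0 0 + (starRingEnd ℂ) (U 1 0) * U 1 0 = 1 := by
    simpa [Matrix.mul_apply, Fin.sum_univ_two, Matrix.conjTranspose_apply, Matrix.one_apply]
      using congrFun (congrFun hU2 0) 0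
  -- real versions
  have hr0 : Complex.normSq (U 0 0) + Complex.normSq (U 0 1) = 1 := by
    have := congrArg Complex.re hrow0
    simpa [Complex.mul_conj] using this
  have hr1 : Complex.normSq (U 1 0) + Complex.normSq (U 1 1) = 1 := by
    have := congrArg Complex.re hrow1
    simpa [Complex.mul_conj] using this
  have hc0 : Complex.normSq (U 0 0) + Complex.normSq (U 1 0) = 1 := by
    have := congrArg Complex.re hcol0
    simpa [← Complex.normSq_eq_conj_mul_self] using this
  have hQ : Complex.normSq (be 0) + Complex.normSq (be 1) = 1 := by
    have := congrArg Complex.re hnormbe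
    simpa [dotProduct, Fin.sum_univ_two, Pi.star_apply, ← Complex.normSq_eq_conj_mul_self]
      using this
  have hP : Complex.normSq (al 0) + Complex.normSq (al 1) = 1 := by
    have := congrArg Complex.re hnormal
    simpa [dotProduct, Fin.sum_univ_two, Pi.star_apply, ← Complex.normSq_eq_conj_mul_self]
      using this
  have hal0 : star (a 0) ⬝ᵥ ψ = al 0 := congrFun hal 0
  have hal1 : star (a 1) ⬝ᵥ ψ = al 1 := congrFun hal 1
  -- components of α
  have e0 : al 0 = U 0 0 * be 0 + U 0 1 * be 1 := by
    have := congrFun halU 0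
    rw [hal0] at this
    simpa [Matrix.mulVec, dotProduct, Fin.sum_univ_two] using this
  have e1 : al 1 = U 1 0 * be 0 + U 1 1 * be 1 := by
    have := congrFun halU 1
    rw [hal1] at this
    simpa [Matrix.mulVec, dotProduct, Fin.sum_univ_two] using this
  -- overlap bounds
  have hcle : ∀ i j, ‖U i j‖ ≤ c := fun i j => hc.2 ⟨i, j, by rw [hUab]⟩
  have hsqc : ∀ i j, Complex.normSq (U i j) ≤ c ^ 2 := by
    intro i j
    rw [← Complex.sq_norm]
    exact pow_le_pow_left₀ (norm_nonneg _) (hcle i j) 2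
  -- the cross term
  set w : ℂ := U 0 0 * (starRingEnd ℂ) (U 0 1) - U 1 0 * (starRingEnd ℂ) (U 1 1) with hwdef
  set r : ℝ := (w * be 0 * (starRingEnd ℂ) (be 1)).re with hrdef
  have hnw : Complex.normSq w = Complex.normSq (U 0 0) * Complex.normSq (U 0 1)
      + Complex.normSq (U 1 0) * Complex.normSq (U 1 1)
      + 2 * (Complex.normSq (U 0 1) * Complex.normSq (U 1 1)) :=
    qdt_normSq_w _ _ _ _ horth
  have hrsq : r ^ 2 ≤ Complex.normSq w * (Complex.normSq (be 0) * Complex.normSq (be 1)) := by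
    have h1 : r ^ 2 ≤ Complex.normSq (w * be 0 * (starRingEnd ℂ) (be 1)) := by
      rw [hrdef, Complex.normSq_apply]
      nlinarith [sq_nonneg (w * be 0 * (starRingEnd ℂ) (be 1)).im]
    simpa [Complex.normSq_mul, Complex.normSq_conj, mul_assoc] using h1
  have hdec := qdt_decomp (U 0 0) (U 0 1) (U 1 0) (U 1 1) (be 0) (be 1)
  rw [← e0, ← e1, ← hwdef, ← hrdef] at hdec
  -- assemble the real data
  set X : ℝ := Complex.normSq (U 0 0) with hXdef
  have n01 : Complex.normSq (U 0 1) = 1 - X := by rw [hXdef]; linarith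
  have n10 : Complex.normSq (U 1 0) = 1 - X := by rw [hXdef]; linarith
  have n11 : Complex.normSq (U 1 1) = X := by rw [hXdef]; linarith
  have hX0 : 0 ≤ X := Complex.normSq_nonneg _
  have hX1 : X ≤ 1 := by
    have := Complex.normSq_nonneg (U 0 1); rw [hXdef]; linarith
  have hXc : X ≤ c ^ 2 := hsqc 0 0
  have hYc : 1 - X ≤ c ^ 2 := by rw [← n10]; exact hsqc 1 0
  have hlin : Complex.normSq (al 0) - Complex.normSq (al 1)
      = (X - (1-X)) * Complex.normSq (be 0) + ((1-X) - X) * Complex.normSq (be 1) + 2*r := by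
    rw [hdec, n01, n10, n11]
  have hr' : r ^ 2 ≤ (4*X*(1-X)) * (Complex.normSq (be 0) * Complex.normSq (be 1)) := by
    have : Complex.normSq w = 4*X*(1-X) := by rw [hnw, n01, n10, n11]; ring
    rw [← this]; exact hrsq
  have habs4 : ∀ z : ℂ, ‖z‖ ^ 4 = Complex.normSq z ^ 2 := by
    intro z
    rw [show (4:ℕ) = 2*2 from rfl, pow_mul, Complex.sq_norm]
  have hbe0 : star (b 0) ⬝ᵥ ψ = be 0 := congrFun hbe 0
  have hbe1 : star (b 1) ⬝ᵥ ψ = be 1 := congrFun hbe 1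
  simp only [Fin.sum_univ_two, habs4, hbe0, hbe1, hal0, hal1]
  exact qdt_final _ _ _ _ X r c hP hQ (Complex.normSq_nonneg _) (Complex.normSq_nonneg _)
    hX0 hX1 hXc hYc hlin hr'
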